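/- arXiv:1503.01712 — 2 statements merged into one kernel-verified Lean document; each statement's English description precedes it below -/
import Mathlib

section
/- Let d = 4 and define G*(x) = ∫_{B(0,1)} G(x, z) dz for x ∈ ℝ^4. There exists a constant C* ∈ (0,∞) such that for all x, y ∈ ℝ^4 with ‖x − y‖ ≤ 1, one has 1/C* ≤ G*(x)/G*(y) ≤ C*. -/
open MeasureTheory ENNReal

noncomputable section

abbrev EucSp (d : ℕ) : Type := EuclideanSpace ℝ (Fin d)

/-- Real-valued Green function G(x,y) = Γ(d/2−1)/(2π^{d/2}) ‖x−y‖^{2−d}. -/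
def greenFnReal (d : ℕ) (x y : EucSp d) : ℝ :=
  Real.Gamma ((d : ℝ) / 2 - 1) / (2 * Real.pi ^ ((d : ℝ) / 2)) * ‖x - y‖ ^ ((2 : ℝ) - d)

/-- G*(x) = ∫_{B(0,1)} G(x,z) dz on ℝ^4. -/
def Gstar (x : EucSp 4) : ℝ :=
  ∫ z in Metric.ball (0 : EucSp 4) 1, greenFnReal 4 x z

namespace Stmt14Aux

open Metric

/-- The essential part of the Green function: `(‖x - z‖²)⁻¹`. -/
def gg (x z : EucSp 4) : ℝ := (‖x - z‖ ^ 2)⁻¹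

lemma green_eq (x z : EucSp 4) :
    greenFnReal 4 x z = (2 * Real.pi ^ 2)⁻¹ * gg x z := by
  unfold greenFnReal gg
  have h1 : ((4 : ℕ) : ℝ) / 2 - 1 = 1 := by norm_num
  have h2 : (2 : ℝ) - ((4 : ℕ) : ℝ) = -2 := by norm_num
  have h3 : Real.pi ^ (((4 : ℕ) : ℝ) / 2) = Real.pi ^ 2 := by
    rw [show ((4 : ℕ) : ℝ) / 2 = ((2 : ℕ) : ℝ) by norm_num, Real.rpow_natCast]
  have h4 : ‖x - z‖ ^ (-2 : ℝ) = (‖x - z‖ ^ 2)⁻¹ := by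
    rw [Real.rpow_neg (norm_nonneg _), show (2 : ℝ) = ((2 : ℕ) : ℝ) by norm_num,
      Real.rpow_natCast]
  rw [h1, h2, h3, h4, Real.Gamma_one]
  ring

lemma gg_meas (x : EucSp 4) : Measurable (gg x) := by unfold gg; fun_prop

lemma gg_nonneg (x z : EucSp 4) : 0 ≤ gg x z := by unfold gg; positivity

lemma lint_le (x : EucSp 4) :
    ∫⁻ z in ball x 1, ENNReal.ofReal (gg x z) ≤ 8 * volume (ball (0 : EucSp 4) 1) := by
  set B := volume (ball (0 : EucSp 4) 1) with hB
  set A : ℕ → Set (EucSp 4) := fun n => ball x (2⁻¹ ^ n) \ ball x (2⁻¹ ^ (n + 1)) with hA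
  have hcover : ball x 1 ⊆ {x} ∪ ⋃ n, A n := by
    intro z hz
    rcases eq_or_ne z x with h | h
    · exact Or.inl (by simp [h])
    · right
      have hz0 : 0 < ‖z - x‖ := by
        rw [norm_pos_iff, sub_ne_zero]; exact h
      have hz1 : ‖z - x‖ < 1 := by
        rw [mem_ball, dist_eq_norm] at hz; exact hz
      have hex : ∃ m : ℕ, (2 : ℝ)⁻¹ ^ (m + 1) ≤ ‖z - x‖ := by
        obtain ⟨m, hm⟩ := exists_pow_lt_of_lt_one hz0 (by norm_num : (2 : ℝ)⁻¹ < 1)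
        exact ⟨m, le_of_lt (lt_of_le_of_lt
          (pow_le_pow_of_le_one (by norm_num) (by norm_num) (Nat.le_succ m)) hm)⟩
      obtain ⟨n, h1, h2⟩ : ∃ n : ℕ, (2 : ℝ)⁻¹ ^ (n + 1) ≤ ‖z - x‖ ∧ ‖z - x‖ < 2⁻¹ ^ n := by
        refine ⟨Nat.find hex, Nat.find_spec hex, ?_⟩
        rcases Nat.eq_zero_or_pos (Nat.find hex) with h0 | h0
        · rw [h0]; simpa using hz1
        · obtain ⟨k, hk⟩ := Nat.exists_eq_succ_of_ne_zero h0.ne'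
          rw [hk]
          have := Nat.find_min hex (m := k) (by omega)
          push_neg at this
          exact this
      refine Set.mem_iUnion.mpr ⟨n, ⟨?_, ?_⟩⟩
      · rw [mem_ball, dist_eq_norm]; exact h2
      · rw [mem_ball, dist_eq_norm, not_lt]; exact h1
  have hAmeas : ∀ n, MeasurableSet (A n) := fun n =>
    measurableSet_ball.diff measurableSet_ball
  have hterm : ∀ n, ∫⁻ z in A n, ENNReal.ofReal (gg x z) ≤ (4 * B) * 2⁻¹ ^ n := by
    intro n
    have hpt : ∀ z ∈ A n, ENNReal.ofReal (gg x z) ≤ ENNReal.ofReal ((4 : ℝ) ^ (n + 1)) := by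
      intro z hz
      apply ENNReal.ofReal_le_ofReal
      have h1 : (2 : ℝ)⁻¹ ^ (n + 1) ≤ ‖x - z‖ := by
        have h := hz.2
        rw [mem_ball, dist_eq_norm, not_lt] at h
        rwa [norm_sub_rev]
      have h2 : (0 : ℝ) < 2⁻¹ ^ (n + 1) := by positivity
      have hsq : ((2 : ℝ)⁻¹ ^ (n + 1)) ^ 2 ≤ ‖x - z‖ ^ 2 := pow_le_pow_left₀ h2.le h1 2
      have key : gg x z ≤ (((2 : ℝ)⁻¹ ^ (n + 1)) ^ 2)⁻¹ := by
        unfold gg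
        exact inv_anti₀ (by positivity) hsq
      refine key.trans (le_of_eq ?_)
      have e1 : (((2 : ℝ)⁻¹ ^ (n + 1)) ^ 2) = ((4 : ℝ)⁻¹) ^ (n + 1) := by
        rw [← pow_mul, mul_comm, pow_mul]; norm_num
      rw [e1, ← inv_pow, inv_inv]
    have hvol : volume (A n) ≤ ENNReal.ofReal (((2 : ℝ)⁻¹ ^ n) ^ 4) * B := by
      calc volume (A n) ≤ volume (ball x (2⁻¹ ^ n)) := measure_mono Set.diff_subset
        _ = ENNReal.ofReal (((2 : ℝ)⁻¹ ^ n) ^ 4) * B := by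
          rw [Measure.addHaar_ball (volume : Measure (EucSp 4)) x (by positivity),
            finrank_euclideanSpace_fin]
    calc ∫⁻ z in A n, ENNReal.ofReal (gg x z)
        ≤ ∫⁻ _ in A n, ENNReal.ofReal ((4 : ℝ) ^ (n + 1)) :=
          setLIntegral_mono measurable_const hpt
      _ = ENNReal.ofReal ((4 : ℝ) ^ (n + 1)) * volume (A n) := setLIntegral_const _ _
      _ ≤ ENNReal.ofReal ((4 : ℝ) ^ (n + 1)) * (ENNReal.ofReal (((2 : ℝ)⁻¹ ^ n) ^ 4) * B) := by
          gcongr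
      _ = ENNReal.ofReal ((4 : ℝ) ^ (n + 1) * ((2 : ℝ)⁻¹ ^ n) ^ 4) * B := by
          rw [ENNReal.ofReal_mul (by positivity), mul_assoc]
      _ = ENNReal.ofReal (4 * (4 : ℝ)⁻¹ ^ n) * B := by
          congr 1
          have e2 : (((2 : ℝ)⁻¹ ^ n) ^ 4) = ((16 : ℝ)⁻¹) ^ n := by
            rw [← pow_mul, mul_comm, pow_mul]; norm_num
          rw [e2, pow_succ, mul_comm ((4 : ℝ) ^ n) 4, mul_assoc, ← mul_pow]
          norm_num
      _ ≤ (4 * B) * 2⁻¹ ^ n := by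
          rw [ENNReal.ofReal_mul (by norm_num), ENNReal.ofReal_pow (by norm_num)]
          have e3 : ENNReal.ofReal ((4 : ℝ)⁻¹) ≤ (2 : ℝ≥0∞)⁻¹ := by
            rw [ENNReal.ofReal_inv_of_pos (by norm_num), ENNReal.ofReal_ofNat]
            exact ENNReal.inv_le_inv.mpr (by norm_num)
          calc ENNReal.ofReal 4 * ENNReal.ofReal ((4 : ℝ)⁻¹) ^ n * B
              ≤ ENNReal.ofReal 4 * (2 : ℝ≥0∞)⁻¹ ^ n * B := by gcongr
            _ = (4 * B) * 2⁻¹ ^ n := by rw [ENNReal.ofReal_ofNat]; ring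
  calc ∫⁻ z in ball x 1, ENNReal.ofReal (gg x z)
      ≤ ∫⁻ z in {x} ∪ ⋃ n, A n, ENNReal.ofReal (gg x z) := lintegral_mono_set hcover
    _ ≤ (∫⁻ z in ({x} : Set (EucSp 4)), ENNReal.ofReal (gg x z))
        + ∫⁻ z in ⋃ n, A n, ENNReal.ofReal (gg x z) := lintegral_union_le _ _ _
    _ ≤ 0 + ∑' n, ∫⁻ z in A n, ENNReal.ofReal (gg x z) := by
        gcongr
        · exact le_of_eq (setLIntegral_measure_zero _ _ (measure_singleton x))
        · exact lintegral_iUnion_le _ _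
    _ ≤ 0 + ∑' n : ℕ, (4 * B) * 2⁻¹ ^ n := by gcongr; exact hterm _
    _ = (4 * B) * ∑' n : ℕ, (2 : ℝ≥0∞)⁻¹ ^ n := by rw [zero_add, ENNReal.tsum_mul_left]
    _ = (4 * B) * 2 := by
        rw [ENNReal.tsum_geometric, ENNReal.one_sub_inv_two, inv_inv]
    _ = 8 * B := by ring

lemma int_ball (x : EucSp 4) : IntegrableOn (gg x) (ball x 1) volume := by
  constructor
  · exact ((gg_meas x).aestronglyMeasurable).restrict
  · rw [hasFiniteIntegral_iff_ofReal (Filter.Eventually.of_forall (gg_nonneg x))]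
    refine lt_of_le_of_lt (lint_le x) ?_
    exact ENNReal.mul_lt_top (by norm_num) measure_ball_lt_top

lemma int_unit (x : EucSp 4) : IntegrableOn (gg x) (ball (0 : EucSp 4) 1) volume := by
  have h1 : IntegrableOn (gg x) (ball (0 : EucSp 4) 1 ∩ ball x 1) volume :=
    (int_ball x).mono_set Set.inter_subset_right
  have h2 : IntegrableOn (gg x) (ball (0 : EucSp 4) 1 \ ball x 1) volume := by
    apply Measure.integrableOn_of_bounded (M := 1)
    · exact ((measure_mono Set.diff_subset).trans_lt measure_ball_lt_top).ne
    · exact (gg_meas x).aestronglyMeasurable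
    · filter_upwards [ae_restrict_mem (measurableSet_ball.diff measurableSet_ball)] with z hz
      have h : (1 : ℝ) ≤ ‖x - z‖ := by
        have := hz.2
        rw [mem_ball, dist_eq_norm, not_lt] at this
        rwa [norm_sub_rev]
      rw [Real.norm_of_nonneg (gg_nonneg x z)]
      unfold gg
      rw [inv_le_one_iff₀]
      right
      nlinarith
  have := (h1.union h2).mono_set (s := ball (0 : EucSp 4) 1)
    (by rw [Set.inter_union_diff])
  exact this

def Vr : ℝ := (volume (ball (0 : EucSp 4) 1)).toReal

lemma Vr_pos : 0 < Vr := by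
  refine ENNReal.toReal_pos ?_ measure_ball_lt_top.ne
  exact (measure_ball_pos volume 0 one_pos).ne'

lemma I_le (x : EucSp 4) : ∫ z in ball (0 : EucSp 4) 1, gg x z ≤ 9 * Vr := by
  have hsplit : ∫ z in ball (0 : EucSp 4) 1, gg x z
      = (∫ z in ball (0 : EucSp 4) 1 ∩ ball x 1, gg x z)
        + ∫ z in ball (0 : EucSp 4) 1 \ ball x 1, gg x z := by
    rw [← setIntegral_union (Set.disjoint_sdiff_right.mono_left Set.inter_subset_right)
      (measurableSet_ball.diff measurableSet_ball)
      ((int_unit x).mono_set Set.inter_subset_left)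
      ((int_unit x).mono_set Set.diff_subset), Set.inter_union_diff]
  rw [hsplit]
  have h1 : ∫ z in ball (0 : EucSp 4) 1 ∩ ball x 1, gg x z ≤ 8 * Vr := by
    calc ∫ z in ball (0 : EucSp 4) 1 ∩ ball x 1, gg x z
        ≤ ∫ z in ball x 1, gg x z := by
          apply setIntegral_mono_set (int_ball x)
            (Filter.Eventually.of_forall (gg_nonneg x))
          exact Filter.Eventually.of_forall Set.inter_subset_right
      _ = (∫⁻ z in ball x 1, ENNReal.ofReal (gg x z)).toReal := by
          rw [integral_eq_lintegral_of_nonneg_ae (Filter.Eventually.of_forall (gg_nonneg x))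
            ((gg_meas x).aestronglyMeasurable).restrict]
      _ ≤ (8 * volume (ball (0 : EucSp 4) 1)).toReal := by
          apply ENNReal.toReal_mono _ (lint_le x)
          exact (ENNReal.mul_lt_top (by norm_num) measure_ball_lt_top).ne
      _ = 8 * Vr := by rw [ENNReal.toReal_mul, ENNReal.toReal_ofNat]; rfl
  have h2 : ∫ z in ball (0 : EucSp 4) 1 \ ball x 1, gg x z ≤ Vr := by
    calc ∫ z in ball (0 : EucSp 4) 1 \ ball x 1, gg x z
        ≤ ∫ _ in ball (0 : EucSp 4) 1 \ ball x 1, (1 : ℝ) := by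
          apply setIntegral_mono_on ((int_unit x).mono_set Set.diff_subset)
            (integrableOn_const
              (((measure_mono Set.diff_subset).trans_lt measure_ball_lt_top).ne))
            (measurableSet_ball.diff measurableSet_ball)
          intro z hz
          have h : (1 : ℝ) ≤ ‖x - z‖ := by
            have := hz.2
            rw [mem_ball, dist_eq_norm, not_lt] at this
            rwa [norm_sub_rev]
          unfold gg
          rw [inv_le_one_iff₀]
          right
          nlinarith
      _ = (volume (ball (0 : EucSp 4) 1 \ ball x 1)).toReal := by
          rw [setIntegral_const, smul_eq_mul, mul_one]; rfl
      _ ≤ Vr := by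
          apply ENNReal.toReal_mono measure_ball_lt_top.ne
          exact measure_mono Set.diff_subset
  linarith

lemma I_ge (x : EucSp 4) :
    Vr / (1 + ‖x‖) ^ 2 ≤ ∫ z in ball (0 : EucSp 4) 1, gg x z := by
  have hconst : ∫ _ in ball (0 : EucSp 4) 1, ((1 + ‖x‖) ^ 2)⁻¹
      = Vr * ((1 + ‖x‖) ^ 2)⁻¹ := by
    rw [setIntegral_const, smul_eq_mul]; rfl
  have hmono : ∫ _ in ball (0 : EucSp 4) 1, ((1 + ‖x‖) ^ 2)⁻¹
      ≤ ∫ z in ball (0 : EucSp 4) 1, gg x z := by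
    apply setIntegral_mono_ae_restrict
      (integrableOn_const measure_ball_lt_top.ne) (int_unit x)
    have hx0 : volume ({x} : Set (EucSp 4)) = 0 := measure_singleton x
    have hae : ∀ᵐ z ∂(volume.restrict (ball (0 : EucSp 4) 1)), z ≠ x := by
      rw [ae_restrict_iff' measurableSet_ball]
      filter_upwards [measure_eq_zero_iff_ae_notMem.mp hx0] with z hz _
      simpa using hz
    filter_upwards [hae, ae_restrict_mem measurableSet_ball] with z hz hzball
    have h1 : ‖x - z‖ ≤ 1 + ‖x‖ := by
      have : ‖z‖ < 1 := by rwa [mem_ball, dist_zero_right] at hzball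
      calc ‖x - z‖ ≤ ‖x‖ + ‖z‖ := norm_sub_le x z
        _ ≤ 1 + ‖x‖ := by linarith
    have h2 : 0 < ‖x - z‖ := by
      rw [norm_pos_iff, sub_ne_zero]; exact fun h => hz h.symm
    unfold gg
    apply inv_anti₀ (by positivity)
    nlinarith
  rw [div_eq_mul_inv]
  exact hconst ▸ hmono

lemma I_far (x : EucSp 4) (h2x : 2 ≤ ‖x‖) :
    ∫ z in ball (0 : EucSp 4) 1, gg x z ≤ Vr / (‖x‖ - 1) ^ 2 := by
  have hconst : ∫ _ in ball (0 : EucSp 4) 1, ((‖x‖ - 1) ^ 2)⁻¹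
      = Vr * ((‖x‖ - 1) ^ 2)⁻¹ := by
    rw [setIntegral_const, smul_eq_mul]; rfl
  have hmono : ∫ z in ball (0 : EucSp 4) 1, gg x z
      ≤ ∫ _ in ball (0 : EucSp 4) 1, ((‖x‖ - 1) ^ 2)⁻¹ := by
    apply setIntegral_mono_on (int_unit x)
      (integrableOn_const measure_ball_lt_top.ne) measurableSet_ball
    intro z hz
    have hz1 : ‖z‖ < 1 := by rwa [mem_ball, dist_zero_right] at hz
    have h1 : ‖x‖ - 1 ≤ ‖x - z‖ := by
      have habs := abs_le.mp (abs_norm_sub_norm_le x z)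
      linarith [habs.1]
    unfold gg
    apply inv_anti₀ (by nlinarith)
    nlinarith
  rw [div_eq_mul_inv]
  exact hconst ▸ hmono

lemma Gstar_eq (x : EucSp 4) :
    Gstar x = (2 * Real.pi ^ 2)⁻¹ * ∫ z in ball (0 : EucSp 4) 1, gg x z := by
  unfold Gstar
  simp_rw [green_eq]
  rw [integral_const_mul]

lemma cpi_pos : (0 : ℝ) < (2 * Real.pi ^ 2)⁻¹ := by
  have := Real.pi_pos; positivity

lemma Gstar_lower (x : EucSp 4) :
    (2 * Real.pi ^ 2)⁻¹ * Vr / (1 + ‖x‖) ^ 2 ≤ Gstar x := by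
  rw [Gstar_eq, mul_div_assoc]
  exact mul_le_mul_of_nonneg_left (I_ge x) cpi_pos.le

lemma Gstar_pos (x : EucSp 4) : 0 < Gstar x := by
  refine lt_of_lt_of_le ?_ (Gstar_lower x)
  have h1 : (0 : ℝ) < (2 * Real.pi ^ 2)⁻¹ * Vr := mul_pos cpi_pos Vr_pos
  positivity

lemma Gstar_upper (x : EucSp 4) :
    Gstar x ≤ 81 * ((2 * Real.pi ^ 2)⁻¹ * Vr) / (1 + ‖x‖) ^ 2 := by
  set c : ℝ := (2 * Real.pi ^ 2)⁻¹ with hc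
  have hcpos : 0 < c := cpi_pos
  have hVr := Vr_pos
  have hx0 : (0 : ℝ) ≤ ‖x‖ := norm_nonneg x
  rw [Gstar_eq]
  rcases le_or_gt ‖x‖ 2 with hx | hx
  · have h9 : (1 + ‖x‖) ^ 2 ≤ 9 := by nlinarith
    calc c * ∫ z in ball (0 : EucSp 4) 1, gg x z ≤ c * (9 * Vr) :=
          mul_le_mul_of_nonneg_left (I_le x) hcpos.le
      _ ≤ 81 * (c * Vr) / (1 + ‖x‖) ^ 2 := by
          rw [le_div_iff₀ (by positivity)]
          nlinarith [mul_nonneg (mul_nonneg hcpos.le hVr.le) (sub_nonneg.mpr h9)]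
  · have hkey : (1 + ‖x‖) ^ 2 ≤ 81 * (‖x‖ - 1) ^ 2 := by
      nlinarith [mul_nonneg (by linarith : (0 : ℝ) ≤ ‖x‖ - 2)
        (by linarith : (0 : ℝ) ≤ 2 * ‖x‖ - 1)]
    calc c * ∫ z in ball (0 : EucSp 4) 1, gg x z ≤ c * (Vr / (‖x‖ - 1) ^ 2) :=
          mul_le_mul_of_nonneg_left (I_far x hx.le) hcpos.le
      _ = c * Vr / (‖x‖ - 1) ^ 2 := by rw [mul_div_assoc]
      _ ≤ 81 * (c * Vr) / (1 + ‖x‖) ^ 2 := by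
          rw [div_le_div_iff₀ (by nlinarith) (by positivity)]
          nlinarith [mul_le_mul_of_nonneg_left hkey (mul_pos hcpos hVr).le]

lemma ratio_le (x y : EucSp 4) (h : ‖x - y‖ ≤ 1) : Gstar x / Gstar y ≤ 324 := by
  set c : ℝ := (2 * Real.pi ^ 2)⁻¹ with hc
  set L : ℝ := c * Vr with hL
  have hLpos : 0 < L := mul_pos cpi_pos Vr_pos
  have hGy : L / (1 + ‖y‖) ^ 2 ≤ Gstar y := Gstar_lower y
  have hGypos : 0 < Gstar y := Gstar_pos y
  have hGx : Gstar x ≤ 81 * L / (1 + ‖x‖) ^ 2 := Gstar_upper x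
  have hyx : ‖y‖ ≤ ‖x‖ + 1 := by
    have habs := abs_le.mp (abs_norm_sub_norm_le x y)
    linarith [habs.1]
  have hs : (1 + ‖y‖) ^ 2 ≤ 4 * (1 + ‖x‖) ^ 2 := by
    nlinarith [norm_nonneg x, norm_nonneg y]
  rw [div_le_iff₀ hGypos]
  calc Gstar x ≤ 81 * L / (1 + ‖x‖) ^ 2 := hGx
    _ ≤ 324 * (L / (1 + ‖y‖) ^ 2) := by
        rw [mul_div_assoc' 324 L _, div_le_div_iff₀ (by positivity) (by positivity)]
        nlinarith [mul_le_mul_of_nonneg_left hs hLpos.le]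
    _ ≤ 324 * Gstar y := by nlinarith [hGy]

end Stmt14Aux

/-- for d = 4 there is a constant C* ∈ (0,∞) such that for all
x, y ∈ ℝ^4 with ‖x − y‖ ≤ 1, 1/C* ≤ G*(x)/G*(y) ≤ C*. -/
theorem stmt14 :
    ∃ Cstar : ℝ, 0 < Cstar ∧ ∀ x y : EucSp 4, ‖x - y‖ ≤ 1 →
      1 / Cstar ≤ Gstar x / Gstar y ∧ Gstar x / Gstar y ≤ Cstar := by
  refine ⟨324, by norm_num, fun x y h => ⟨?_, Stmt14Aux.ratio_le x y h⟩⟩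
  have h' : ‖y - x‖ ≤ 1 := by rwa [norm_sub_rev]
  have hr := Stmt14Aux.ratio_le y x h'
  have hGxpos : 0 < Gstar x := Stmt14Aux.Gstar_pos x
  have hGypos : 0 < Gstar y := Stmt14Aux.Gstar_pos y
  rw [div_le_iff₀ hGxpos] at hr
  rw [le_div_iff₀ hGypos]
  linarith

end
end

section
/- Let d ≥ 2. There exists a constant c = c(d) > 0 such that for every t > 0, every r ∈ (0,1) and every continuous path γ : [0,t] → ℝ^d with γ(0) = 0, the Lebesgue measure of the 2r-neighbourhood of the path satisfies Leb_d( ⋃_{0≤s≤t} B(γ(s), 2r) ) ≥ c · r^{d−1} · sup_{0≤s≤t} ‖γ(s)‖. -/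
open MeasureTheory ENNReal

noncomputable section

/-- for d ≥ 2 there is c = c(d) > 0 such that for every t > 0,
r ∈ (0,1) and continuous path γ : [0,t] → ℝ^d with γ 0 = 0,
Leb_d(⋃_{0≤s≤t} B(γ(s), 2r)) ≥ c r^{d−1} sup_{0≤s≤t} ‖γ(s)‖. -/
theorem stmt17 (d : ℕ) (hd : 2 ≤ d) :
    ∃ c : ℝ, 0 < c ∧ ∀ t : ℝ, 0 < t → ∀ r : ℝ, r ∈ Set.Ioo (0 : ℝ) 1 →
      ∀ γ : ℝ → EucSp d, ContinuousOn γ (Set.Icc 0 t) → γ 0 = 0 →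
      ENNReal.ofReal (c * r ^ (d - 1) * ⨆ s ∈ Set.Icc (0 : ℝ) t, ‖γ s‖)
        ≤ volume (⋃ s ∈ Set.Icc (0 : ℝ) t, Metric.ball (γ s) (2 * r)) := by
  have hdpos : 0 < d := lt_of_lt_of_le two_pos hd
  haveI : Nontrivial (EucSp d) := by
    have : 0 < Module.finrank ℝ (EucSp d) := by
      rw [finrank_euclideanSpace, Fintype.card_fin]; exact hdpos
    exact Module.nontrivial_of_finrank_pos this
  set ω : ℝ≥0∞ := volume (Metric.ball (0 : EucSp d) 1) with hω
  have hω0 : 0 < ω := Metric.measure_ball_pos _ _ one_pos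
  have hωt : ω ≠ ⊤ := MeasureTheory.measure_ball_lt_top.ne
  have hωR : 0 < ω.toReal := ENNReal.toReal_pos hω0.ne' hωt
  refine ⟨2 ^ (d - 2) * ω.toReal, by positivity, ?_⟩
  intro t ht r hr γ hγ hγ0
  obtain ⟨hr0, hr1⟩ := hr
  -- maximum point
  obtain ⟨s₀, hs₀, hmax⟩ := (isCompact_Icc (a := (0:ℝ)) (b := t)).exists_isMaxOn
    ⟨0, by constructor <;> [rfl; exact ht.le]⟩ (continuous_norm.comp_continuousOn hγ)
  have hmax' : ∀ s ∈ Set.Icc (0:ℝ) t, ‖γ s‖ ≤ ‖γ s₀‖ := fun s hs => hmax hs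
  have hM : (⨆ s ∈ Set.Icc (0 : ℝ) t, ‖γ s‖) ≤ ‖γ s₀‖ := by
    refine Real.iSup_le (fun s => Real.iSup_le (fun hs => hmax' s hs) (norm_nonneg _))
      (norm_nonneg _)
  by_cases hM0 : ‖γ s₀‖ ≤ 0
  · have : (2 ^ (d - 2) * ω.toReal) * r ^ (d - 1) * (⨆ s ∈ Set.Icc (0 : ℝ) t, ‖γ s‖) ≤ 0 :=
      mul_nonpos_of_nonneg_of_nonpos (by positivity) (hM.trans hM0)
    rw [ENNReal.ofReal_eq_zero.mpr this]
    exact zero_le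
  push_neg at hM0
  set M0 : ℝ := ‖γ s₀‖ with hM0def
  set u : EucSp d := M0⁻¹ • γ s₀ with hu
  have hunorm : ‖u‖ = 1 := by
    rw [hu, norm_smul, norm_inv, norm_norm]
    field_simp
    exact div_self hM0.ne'
  set p : ℝ → ℝ := fun s => @inner ℝ _ _ (γ s) u with hp
  have hp0 : p 0 = 0 := by simp [hp, hγ0]
  have hps₀ : p s₀ = M0 := by
    simp only [hp, hu, real_inner_smul_right, real_inner_self_eq_norm_sq]
    rw [← hM0def, sq]
    field_simp
  have hpcont : ContinuousOn p (Set.Icc 0 t) := hγ.inner continuousOn_const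
  have hlip : ∀ a b : ℝ, |p a - p b| ≤ ‖γ a - γ b‖ := by
    intro a b
    have : p a - p b = @inner ℝ _ _ (γ a - γ b) u := by rw [hp]; simp [inner_sub_left]
    rw [this]
    calc |@inner ℝ _ _ (γ a - γ b) u| ≤ ‖γ a - γ b‖ * ‖u‖ := abs_real_inner_le_norm _ _
      _ = ‖γ a - γ b‖ := by rw [hunorm, mul_one]
  set N : ℕ := ⌊M0 / (4 * r)⌋₊ with hN
  have h4r : (0:ℝ) < 4 * r := by linarith
  have hs₀0 : (0:ℝ) ≤ s₀ := hs₀.1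
  have hIVT : Set.Icc (p 0) (p s₀) ⊆ p '' Set.Icc 0 s₀ :=
    intermediate_value_Icc hs₀0 (hpcont.mono (Set.Icc_subset_Icc le_rfl hs₀.2))
  have hsel : ∀ k : ℕ, ∃ s, k ≤ N → s ∈ Set.Icc 0 s₀ ∧ p s = 4 * r * k := by
    intro k
    by_cases hk : k ≤ N
    · have hmem : (4 * r * k) ∈ Set.Icc (p 0) (p s₀) := by
        rw [hp0, hps₀]
        constructor
        · positivity
        · have : (k : ℝ) ≤ M0 / (4 * r) := by
            exact_mod_cast (Nat.le_floor_iff (by positivity)).mp hk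
          calc 4 * r * k ≤ 4 * r * (M0 / (4 * r)) := by
                exact mul_le_mul_of_nonneg_left this h4r.le
            _ = M0 := by field_simp
      obtain ⟨s, hs, hps⟩ := hIVT hmem
      exact ⟨s, fun _ => ⟨hs, hps⟩⟩
    · exact ⟨0, fun h => absurd h hk⟩
  choose σ hσ using hsel
  have hσmem : ∀ k ∈ Finset.range (N + 1), σ k ∈ Set.Icc (0:ℝ) t := by
    intro k hk
    have h := (hσ k (Nat.lt_succ_iff.mp (Finset.mem_range.mp hk))).1
    exact ⟨h.1, h.2.trans hs₀.2⟩
  have hσval : ∀ k ∈ Finset.range (N + 1), p (σ k) = 4 * r * k := fun k hk =>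
    (hσ k (Nat.lt_succ_iff.mp (Finset.mem_range.mp hk))).2
  -- disjointness
  have hdisj : (↑(Finset.range (N + 1)) : Set ℕ).PairwiseDisjoint
      (fun k => Metric.ball (γ (σ k)) (2 * r)) := by
    intro j hj k hk hjk
    simp only [Finset.coe_range, Set.mem_Iio] at hj hk
    apply Metric.ball_disjoint_ball
    have hdist : 4 * r ≤ dist (γ (σ j)) (γ (σ k)) := by
      rw [dist_eq_norm]
      refine le_trans ?_ (hlip (σ j) (σ k))
      rw [hσval j (Finset.mem_range.mpr hj), hσval k (Finset.mem_range.mpr hk)]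
      have : 4 * r * (j:ℝ) - 4 * r * (k:ℝ) = 4 * r * ((j:ℝ) - k) := by ring
      rw [this, abs_mul, abs_of_pos h4r]
      have h1 : (1:ℝ) ≤ |(j:ℝ) - (k:ℝ)| := by
        have hz : ((j:ℤ) - (k:ℤ)) ≠ 0 := sub_ne_zero.mpr (by exact_mod_cast hjk)
        have h1' : (1:ℤ) ≤ |(j:ℤ) - (k:ℤ)| := Int.one_le_abs hz
        exact_mod_cast h1'
      nlinarith
    linarith
  have hvol_eq : volume (⋃ k ∈ Finset.range (N + 1), Metric.ball (γ (σ k)) (2 * r))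
      = ∑ k ∈ Finset.range (N + 1), volume (Metric.ball (γ (σ k)) (2 * r)) :=
    measure_biUnion_finset hdisj (fun k _ => Metric.isOpen_ball.measurableSet)
  have hball : ∀ x : EucSp d, volume (Metric.ball x (2 * r))
      = ENNReal.ofReal ((2 * r) ^ d) * ω := by
    intro x
    rw [hω, Measure.addHaar_ball volume x (by positivity)]
    congr 2
    simp [finrank_euclideanSpace]
  have hsub : (⋃ k ∈ Finset.range (N + 1), Metric.ball (γ (σ k)) (2 * r))
      ⊆ ⋃ s ∈ Set.Icc (0:ℝ) t, Metric.ball (γ s) (2 * r) := by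
    refine Set.iUnion₂_subset fun k hk => ?_
    exact Set.subset_iUnion₂ (s := fun s _ => Metric.ball (γ s) (2 * r)) (σ k) (hσmem k hk)
  -- real-number inequality
  have hMlt : M0 < 4 * r * (N + 1) := by
    have := Nat.lt_floor_add_one (M0 / (4 * r))
    calc M0 = 4 * r * (M0 / (4 * r)) := by field_simp
      _ < 4 * r * (N + 1) := by
        apply mul_lt_mul_of_pos_left _ h4r
        exact_mod_cast this
  have hreal : (2 ^ (d - 2) * ω.toReal) * r ^ (d - 1) * (⨆ s ∈ Set.Icc (0 : ℝ) t, ‖γ s‖)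
      ≤ ((N:ℝ) + 1) * ((2 * r) ^ d * ω.toReal) := by
    have hMsup : (⨆ s ∈ Set.Icc (0 : ℝ) t, ‖γ s‖) ≤ M0 := hM
    have hsupnn : (0:ℝ) ≤ ⨆ s ∈ Set.Icc (0 : ℝ) t, ‖γ s‖ :=
      Real.iSup_nonneg fun s => Real.iSup_nonneg fun _ => norm_nonneg _
    have step1 : (2 ^ (d - 2) * ω.toReal) * r ^ (d - 1) * (⨆ s ∈ Set.Icc (0 : ℝ) t, ‖γ s‖)
        ≤ (2 ^ (d - 2) * ω.toReal) * r ^ (d - 1) * M0 :=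
      mul_le_mul_of_nonneg_left hMsup (by positivity)
    refine step1.trans ?_
    have hpow : (2:ℝ) ^ (d - 2) * 4 = 2 ^ d := by
      rw [show (4:ℝ) = 2 ^ 2 by norm_num, ← pow_add, Nat.sub_add_cancel hd]
    have hrpow : r ^ (d - 1) * r = r ^ d := by
      rw [← pow_succ, Nat.sub_add_cancel (le_trans one_le_two hd)]
    have h2r : (2 * r) ^ d = 2 ^ d * r ^ d := by rw [mul_pow]
    calc (2 ^ (d - 2) * ω.toReal) * r ^ (d - 1) * M0
        ≤ (2 ^ (d - 2) * ω.toReal) * r ^ (d - 1) * (4 * r * (N + 1)) :=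
          mul_le_mul_of_nonneg_left hMlt.le (by positivity)
      _ = ((N:ℝ) + 1) * ((2 ^ (d - 2) * 4) * (r ^ (d - 1) * r) * ω.toReal) := by ring
      _ = ((N:ℝ) + 1) * ((2 * r) ^ d * ω.toReal) := by rw [hpow, hrpow, h2r]
  -- assemble in ℝ≥0∞
  calc ENNReal.ofReal ((2 ^ (d - 2) * ω.toReal) * r ^ (d - 1) * (⨆ s ∈ Set.Icc (0 : ℝ) t, ‖γ s‖))
      ≤ ENNReal.ofReal (((N:ℝ) + 1) * ((2 * r) ^ d * ω.toReal)) :=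
        ENNReal.ofReal_le_ofReal hreal
    _ = ((N:ℕ) + 1 : ℕ) * (ENNReal.ofReal ((2 * r) ^ d) * ω) := by
        rw [ENNReal.ofReal_mul (by positivity), ENNReal.ofReal_mul (by positivity),
          ENNReal.ofReal_toReal hωt]
        congr 1
        push_cast
        rw [ENNReal.ofReal_add (by positivity) zero_le_one]
        simp
    _ = ∑ k ∈ Finset.range (N + 1), volume (Metric.ball (γ (σ k)) (2 * r)) := by
        rw [Finset.sum_congr rfl (fun k _ => hball (γ (σ k))), Finset.sum_const,
          Finset.card_range, nsmul_eq_mul]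
    _ = volume (⋃ k ∈ Finset.range (N + 1), Metric.ball (γ (σ k)) (2 * r)) := hvol_eq.symm
    _ ≤ volume (⋃ s ∈ Set.Icc (0:ℝ) t, Metric.ball (γ s) (2 * r)) := measure_mono hsub

end
end
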